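/- arXiv:2507.20047 — 5 statements merged into one kernel-verified Lean document; each statement's English description precedes it below -/
import Mathlib

section
/- Ward's linkage is weight-stable: for any nonempty disjoint finite clusters A, B ⊆ ℝ^k, d_Ward(A ∪ B, A) = (|B| / (2|A| + |B|)) · d_Ward(A, B); in particular d_Ward(A ∪ B, A) ≤ (|B| / (|A| + |B|)) · d_Ward(A, B). -/
open scoped Classical

noncomputable def centroid {k : ℕ} (A : Finset (EuclideanSpace ℝ (Fin k))) :
    EuclideanSpace ℝ (Fin k) :=
  (A.card : ℝ)⁻¹ • ∑ a ∈ A, a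

noncomputable def dWard {k : ℕ} (X Y : Finset (EuclideanSpace ℝ (Fin k))) : ℝ :=
  ((X.card : ℝ) * Y.card / (X.card + Y.card)) * ‖centroid X - centroid Y‖ ^ 2

theorem ward_weight_stable {k : ℕ} (A B : Finset (EuclideanSpace ℝ (Fin k)))
    (hA : A.Nonempty) (hB : B.Nonempty) (hAB : Disjoint A B) :
    dWard (A ∪ B) A = ((B.card : ℝ) / (2 * A.card + B.card)) * dWard A B ∧
    dWard (A ∪ B) A ≤ ((B.card : ℝ) / (A.card + B.card)) * dWard A B := by
  have ha : (0:ℝ) < A.card := by exact_mod_cast Finset.card_pos.mpr hA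
  have hb : (0:ℝ) < B.card := by exact_mod_cast Finset.card_pos.mpr hB
  have hab : (0:ℝ) < (A.card : ℝ) + B.card := by linarith
  have h2ab : (0:ℝ) < 2 * (A.card : ℝ) + B.card := by linarith
  have hcard : (((A ∪ B).card : ℝ)) = (A.card : ℝ) + B.card := by
    rw [Finset.card_union_of_disjoint hAB]; push_cast; ring
  have hmu : centroid (A ∪ B) - centroid A
      = ((B.card : ℝ) / ((A.card : ℝ) + B.card)) • (centroid B - centroid A) := by
    unfold centroid
    rw [Finset.sum_union hAB, hcard]
    match_scalars <;> field_simp <;> ring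
  have hnorm : ‖centroid (A ∪ B) - centroid A‖ ^ 2
      = ((B.card : ℝ) / ((A.card : ℝ) + B.card)) ^ 2 * ‖centroid A - centroid B‖ ^ 2 := by
    rw [hmu, norm_smul, mul_pow, Real.norm_eq_abs, sq_abs, norm_sub_rev]
  have heq : dWard (A ∪ B) A = ((B.card : ℝ) / (2 * A.card + B.card)) * dWard A B := by
    unfold dWard
    rw [hcard, hnorm]
    field_simp
    ring
  refine ⟨heq, ?_⟩
  rw [heq]
  have hW : 0 ≤ dWard A B := by
    unfold dWard
    positivity
  have hcoef : (B.card : ℝ) / (2 * A.card + B.card) ≤ (B.card : ℝ) / (A.card + B.card) := by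
    apply div_le_div_of_nonneg_left hb.le hab
    linarith
  exact mul_le_mul_of_nonneg_right hcoef hW
end

section
/- Ward's linkage is average-reducible: for nonempty pairwise disjoint finite clusters A, B, C ⊆ ℝ^k with |C| ≥ |A| + |B|, we have d_Ward(A ∪ B, C) ≥ (d_Ward(A, C) + d_Ward(B, C))/2 - d_Ward(A, B). -/
open scoped Classical
set_option maxHeartbeats 2000000 in

lemma ward_key (a b c s r t : ℝ) (ha : 0 < a) (hb : 0 < b) (hle : a + b ≤ c)
    (ht : t ≤ s * r) :
    c/((a+b)*((a+b)+c)) * (a^2*s^2 + 2*(a*b)*t + b^2*r^2) ≥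
      (a*c/(a+c) * s^2 + b*c/(b+c) * r^2)/2 - a*b/(a+b) * (s^2+r^2-2*t) := by
  obtain ⟨e, he, rfl⟩ : ∃ e, 0 ≤ e ∧ a + b + e = c := ⟨c - (a+b), by linarith, by ring⟩
  set P : ℝ := a*b*e^3 + 5*a*b^2*e^2 + 8*a*b^3*e + 4*a*b^4 + a^2*e^3 + 9*a^2*b*e^2 + 23*a^2*b^2*e + 18*a^2*b^3 + 4*a^3*e^2 + 20*a^3*b*e + 24*a^3*b^2 + 5*a^4*e + 12*a^4*b + 2*a^5 with hPdef
  set Q : ℝ := b^2*e^3 + 4*b^3*e^2 + 5*b^4*e + 2*b^5 + a*b*e^3 + 9*a*b^2*e^2 + 20*a*b^3*e + 12*a*b^4 + 5*a^2*b*e^2 + 23*a^2*b^2*e + 24*a^2*b^3 + 8*a^3*b*e + 18*a^3*b^2 + 4*a^4*b with hQdef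
  set R : ℝ := 4*a*b*(a+b)*((a+(a+b+e))*(b+(a+b+e))) with hRdef
  have hP : 0 < P := by rw [hPdef]; positivity
  have hQ : 0 < Q := by rw [hQdef]; positivity
  have hR : 0 < R := by rw [hRdef]; positivity
  have hdisc : (0:ℝ) ≤ 4*P*Q - R^2 := by
    rw [hPdef, hQdef, hRdef]
    have h : 4*(a*b*e^3 + 5*a*b^2*e^2 + 8*a*b^3*e + 4*a*b^4 + a^2*e^3 + 9*a^2*b*e^2 + 23*a^2*b^2*e + 18*a^2*b^3 + 4*a^3*e^2 + 20*a^3*b*e + 24*a^3*b^2 + 5*a^4*e + 12*a^4*b + 2*a^5)*(b^2*e^3 + 4*b^3*e^2 + 5*b^4*e + 2*b^5 + a*b*e^3 + 9*a*b^2*e^2 + 20*a*b^3*e + 12*a*b^4 + 5*a^2*b*e^2 + 23*a^2*b^2*e + 24*a^2*b^3 + 8*a^3*b*e + 18*a^3*b^2 + 4*a^4*b) - (4*a*b*(a+b)*((a+(a+b+e))*(b+(a+b+e))))^2 =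
      4*a*b^3*e^6 + 36*a*b^4*e^5 + 132*a*b^5*e^4 + 252*a*b^6*e^3 + 264*a*b^7*e^2 + 144*a*b^8*e + 32*a*b^9 + 8*a^2*b^2*e^6 + 108*a^2*b^3*e^5 + 532*a^2*b^4*e^4 + 1284*a^2*b^5*e^3 + 1636*a^2*b^6*e^2 + 1056*a^2*b^7*e + 272*a^2*b^8 + 4*a^3*b*e^6 + 108*a^3*b^2*e^5 + 800*a^3*b^3*e^4 + 2592*a^3*b^4*e^3 + 4168*a^3*b^5*e^2 + 3264*a^3*b^6*e + 992*a^3*b^7 + 36*a^4*b*e^5 + 532*a^4*b^2*e^4 + 2592*a^4*b^3*e^3 + 5592*a^4*b^4*e^2 + 5520*a^4*b^5*e + 2032*a^4*b^6 + 132*a^5*b*e^4 + 1284*a^5*b^2*e^3 + 4168*a^5*b^3*e^2 + 5520*a^5*b^4*e + 2560*a^5*b^5 + 252*a^6*b*e^3 + 1636*a^6*b^2*e^2 + 3264*a^6*b^3*e + 2032*a^6*b^4 + 264*a^7*b*e^2 + 1056*a^7*b^2*e + 992*a^7*b^3 + 144*a^8*b*e + 272*a^8*b^2 + 32*a^9*b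 := by ring
    rw [h]; positivity
  have hF : 0 ≤ P*s^2 + Q*r^2 - R*t := by
    have hid : 4*P*(P*s^2 + Q*r^2 - R*t) =
        (2*P*s - R*r)^2 + (4*P*Q - R^2)*r^2 + 4*P*R*(s*r - t) := by ring
    nlinarith [sq_nonneg (2*P*s - R*r), mul_nonneg hdisc (sq_nonneg r),
      mul_nonneg (mul_nonneg (by linarith : (0:ℝ) ≤ 4*P) hR.le) (by linarith : (0:ℝ) ≤ s*r - t), hP]
  rw [ge_iff_le, ← sub_nonneg]
  have hab : (0:ℝ) < a + b := by linarith
  have hD : (0:ℝ) < 2*(a+b)*((a+b)+(a+b+e))*((a+(a+b+e))*(b+(a+b+e))) := by positivity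
  have hkey : (a+b+e)/((a+b)*((a+b)+(a+b+e))) * (a^2*s^2 + 2*(a*b)*t + b^2*r^2) -
      ((a*(a+b+e)/(a+(a+b+e)) * s^2 + b*(a+b+e)/(b+(a+b+e)) * r^2)/2 - a*b/(a+b) * (s^2+r^2-2*t))
      = (P*s^2 + Q*r^2 - R*t) / (2*(a+b)*((a+b)+(a+b+e))*((a+(a+b+e))*(b+(a+b+e)))) := by
    rw [hPdef, hQdef, hRdef]
    field_simp
    ring
  rw [hkey]
  exact div_nonneg hF hD.le


theorem ward_average_reducible {k : ℕ} (A B C : Finset (EuclideanSpace ℝ (Fin k)))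
    (hA : A.Nonempty) (hB : B.Nonempty) (hC : C.Nonempty)
    (hAB : Disjoint A B) (hAC : Disjoint A C) (hBC : Disjoint B C)
    (hcard : A.card + B.card ≤ C.card) :
    dWard (A ∪ B) C ≥ (dWard A C + dWard B C) / 2 - dWard A B := by
  set a : ℝ := (A.card : ℝ) with hadef
  set b : ℝ := (B.card : ℝ) with hbdef
  set c : ℝ := (C.card : ℝ) with hcdef
  have ha : 0 < a := by rw [hadef]; exact_mod_cast hA.card_pos
  have hb : 0 < b := by rw [hbdef]; exact_mod_cast hB.card_pos
  have hc : 0 < c := by rw [hcdef]; exact_mod_cast hC.card_pos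
  have hle : a + b ≤ c := by rw [hadef, hbdef, hcdef]; exact_mod_cast hcard
  set α := centroid A with had2
  set β := centroid B with hbd2
  set γ := centroid C with hcd2
  set u := α - γ with hud
  set v := β - γ with hvd
  set s := ‖u‖
  set r := ‖v‖
  set t : ℝ := inner ℝ u v with htd
  have ht : t ≤ s * r := real_inner_le_norm u v
  have hcardU : ((A ∪ B).card : ℝ) = a + b := by
    rw [Finset.card_union_of_disjoint hAB]; push_cast; ring
  have hsA : a • α = ∑ x ∈ A, x := by
    rw [had2, centroid, smul_inv_smul₀ (Nat.cast_ne_zero.mpr hA.card_pos.ne' : (A.card : ℝ) ≠ 0)]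
  have hsB : b • β = ∑ x ∈ B, x := by
    rw [hbd2, centroid, smul_inv_smul₀ (Nat.cast_ne_zero.mpr hB.card_pos.ne' : (B.card : ℝ) ≠ 0)]
  have hcu : centroid (A ∪ B) = (a + b)⁻¹ • (a • α + b • β) := by
    rw [centroid, hcardU, Finset.sum_union hAB, hsA, hsB]
  have hw : centroid (A ∪ B) - γ = (a + b)⁻¹ • (a • u + b • v) := by
    rw [hcu, hud, hvd]
    have hab : a + b ≠ 0 := by positivity
    match_scalars <;> field_simp <;> ring
  have hnorm : ‖centroid (A ∪ B) - γ‖ ^ 2 =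
      ((a + b)⁻¹)^2 * (a^2 * s^2 + 2*(a*b)*t + b^2 * r^2) := by
    rw [hw, norm_smul, mul_pow, @norm_add_sq_real, norm_smul, norm_smul,
      real_inner_smul_left, real_inner_smul_right]
    rw [Real.norm_eq_abs, Real.norm_eq_abs, Real.norm_eq_abs,
      abs_of_pos ha, abs_of_pos hb, abs_of_pos (by positivity : (0:ℝ) < (a+b)⁻¹)]
    ring
  have eAB : dWard (A ∪ B) C = c/((a+b)*((a+b)+c)) * (a^2*s^2 + 2*(a*b)*t + b^2*r^2) := by
    rw [dWard, hcardU, hnorm]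
    have hab : a + b ≠ 0 := by positivity
    have : (a+b) + c ≠ 0 := by positivity
    field_simp
    ring
  have eA : dWard A C = a*c/(a+c) * s^2 := by rw [dWard]
  have eB : dWard B C = b*c/(b+c) * r^2 := by rw [dWard]
  have eD : dWard A B = a*b/(a+b) * (s^2+r^2-2*t) := by
    rw [dWard]
    have : α - β = u - v := by rw [hud, hvd]; abel
    rw [this, @norm_sub_sq_real]
    ring
  rw [eAB, eA, eB, eD]
  exact ward_key a b c s r t ha hb hle ht
end

section
/- Ward's linkage approximately satisfies the triangle inequality with constant 4: for nonempty pairwise disjoint finite clusters A, B, C ⊆ ℝ^k with |B| ≥ min(|A|, |C|), we have d_Ward(A, C) ≤ 4·(d_Ward(A, B) + d_Ward(B, C)). -/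
lemma ward_key_s10 (a b c : ℝ) (ha : 0 < a) (hb : 0 < b) (hc : 0 < c)
    (h : a ≤ b ∨ c ≤ b) :
    a * c / (a + c) ≤ 2 * (a * b / (a + b)) := by
  rw [← mul_div_assoc, div_le_div_iff₀ (by linarith) (by linarith)]
  rcases h with h | h
  · nlinarith [mul_le_mul_of_nonneg_right h (mul_pos ha hc).le, mul_pos (mul_pos ha ha) hb]
  · nlinarith [mul_le_mul_of_nonneg_left h (mul_pos ha ha).le, mul_pos (mul_pos ha ha) hb]

theorem ward_approx_triangle {k : ℕ} (A B C : Finset (EuclideanSpace ℝ (Fin k)))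
    (hA : A.Nonempty) (hB : B.Nonempty) (hC : C.Nonempty)
    (hAB : Disjoint A B) (hAC : Disjoint A C) (hBC : Disjoint B C)
    (hcard : min A.card C.card ≤ B.card) :
    dWard A C ≤ 4 * (dWard A B + dWard B C) := by
  have ha : (0:ℝ) < A.card := by exact_mod_cast hA.card_pos
  have hb : (0:ℝ) < B.card := by exact_mod_cast hB.card_pos
  have hc : (0:ℝ) < C.card := by exact_mod_cast hC.card_pos
  have hcase : (A.card:ℝ) ≤ B.card ∨ (C.card:ℝ) ≤ B.card := by
    rcases min_le_iff.mp (le_refl (min A.card C.card)) with h | h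
    · rcases le_total A.card C.card with h' | h'
      · left; exact_mod_cast (min_eq_left h') ▸ hcard
      · right; exact_mod_cast (min_eq_right h') ▸ hcard
    · right; exact_mod_cast le_trans h hcard
  set x := ‖centroid A - centroid B‖ with hx
  set y := ‖centroid B - centroid C‖ with hy
  set z := ‖centroid A - centroid C‖ with hzdef
  have hxy : z ≤ x + y := by
    have h : centroid A - centroid C =
        (centroid A - centroid B) + (centroid B - centroid C) := by abel
    rw [hzdef, h]; exact norm_add_le _ _
  have hx0 : 0 ≤ x := norm_nonneg _
  have hy0 : 0 ≤ y := norm_nonneg _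
  have hz0 : 0 ≤ z := norm_nonneg _
  have hz2 : z ^ 2 ≤ 2 * x ^ 2 + 2 * y ^ 2 := by
    nlinarith [mul_le_mul hxy hxy hz0 (by linarith : (0:ℝ) ≤ x + y), sq_nonneg (x - y)]
  have h1 : (A.card:ℝ) * C.card / (A.card + C.card) ≤
      2 * ((A.card:ℝ) * B.card / (A.card + B.card)) :=
    ward_key_s10 _ _ _ ha hb hc hcase
  have h2 : (A.card:ℝ) * C.card / (A.card + C.card) ≤
      2 * ((B.card:ℝ) * C.card / (B.card + C.card)) := by
    have := ward_key_s10 (C.card:ℝ) B.card A.card hc hb ha hcase.symm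
    have e1 : (C.card:ℝ) * A.card / (C.card + A.card) =
        (A.card:ℝ) * C.card / (A.card + C.card) := by ring
    have e2 : (C.card:ℝ) * B.card / (C.card + B.card) =
        (B.card:ℝ) * C.card / (B.card + C.card) := by ring
    rw [e1, e2] at this; exact this
  have hw0 : 0 ≤ (A.card:ℝ) * C.card / (A.card + C.card) := by positivity
  unfold dWard
  rw [← hx, ← hy, ← hzdef]
  nlinarith [mul_le_mul_of_nonneg_left hz2 hw0,
    mul_nonneg (by linarith : (0:ℝ) ≤ 2 * ((A.card:ℝ) * B.card / (A.card + B.card)) - (A.card:ℝ) * C.card / (A.card + C.card)) (sq_nonneg x),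
    mul_nonneg (by linarith : (0:ℝ) ≤ 2 * ((B.card:ℝ) * C.card / (B.card + C.card)) - (A.card:ℝ) * C.card / (A.card + C.card)) (sq_nonneg y)]
end

section
/- Ward's linkage is weak-reducible: for nonempty pairwise disjoint finite clusters A, B, C ⊆ ℝ^k with d_Ward(A, B) ≥ max(d_Ward(A, C), d_Ward(B, C)), we have d_Ward(A ∪ C, B) ≥ d_Ward(B, C) and d_Ward(B ∪ C, A) ≥ d_Ward(A, C). -/
open scoped Classical

private lemma ward_real_key (a b c U V I : ℝ) (ha : 0 < a) (hb : 0 < b) (hc : 0 < c)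
    (h1 : a*c/(a+c)*(U - 2*I + V) ≤ a*b/(a+b)*U)
    (h2 : b*c/(b+c)*V ≤ a*b/(a+b)*U) :
    b*c/(b+c)*V ≤ (a+c)*b/((a+c)+b) * ((a+c)⁻¹^2 * (a^2*U + 2*(a*c)*I + c^2*V)) := by
  have hab : 0 < a + b := by linarith
  have hac : 0 < a + c := by linarith
  have hbc : 0 < b + c := by linarith
  have h1' : a*c*(a+b)*(U - 2*I + V) ≤ a*b*(a+c)*U := by
    rw [div_mul_eq_mul_div, div_mul_eq_mul_div, div_le_div_iff₀ hac hab] at h1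
    nlinarith [h1]
  have h2' : b*c*(a+b)*V ≤ a*b*(b+c)*U := by
    rw [div_mul_eq_mul_div, div_mul_eq_mul_div, div_le_div_iff₀ hbc hab] at h2
    nlinarith [h2]
  have hR : (a+c)*b/((a+c)+b) * ((a+c)⁻¹^2 * (a^2*U + 2*(a*c)*I + c^2*V))
      = b*(a^2*U + 2*(a*c)*I + c^2*V) / ((a+c)*((a+c)+b)) := by
    field_simp
  rw [hR, div_mul_eq_mul_div,
    div_le_div_iff₀ hbc (by positivity : (0:ℝ) < (a+c)*((a+c)+b))]
  nlinarith [mul_le_mul_of_nonneg_left h1' hbc.le, mul_le_mul_of_nonneg_left h2' hac.le,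
    mul_pos ha hb, mul_pos hb hc, mul_pos ha hc]

private lemma ward_vec_key {k : ℕ} (a b c : ℝ) (ha : 0 < a) (hb : 0 < b) (hc : 0 < c)
    (u v : EuclideanSpace ℝ (Fin k))
    (h1 : a*c/(a+c)*‖u - v‖^2 ≤ a*b/(a+b)*‖u‖^2)
    (h2 : b*c/(b+c)*‖v‖^2 ≤ a*b/(a+b)*‖u‖^2) :
    b*c/(b+c)*‖v‖^2 ≤ (a+c)*b/((a+c)+b) * ‖(a+c)⁻¹ • (a • u + c • v)‖^2 := by
  have hW : ‖u - v‖^2 = ‖u‖^2 - 2*(inner ℝ u v : ℝ) + ‖v‖^2 := by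
    rw [@norm_sub_sq_real]
  have hE : ‖a • u + c • v‖^2
      = a^2*‖u‖^2 + 2*(a*c)*(inner ℝ u v : ℝ) + c^2*‖v‖^2 := by
    rw [@norm_add_sq_real, norm_smul, norm_smul, real_inner_smul_left, real_inner_smul_right,
      Real.norm_eq_abs, Real.norm_eq_abs, abs_of_pos ha, abs_of_pos hc]
    ring
  have hS : ‖(a+c)⁻¹ • (a • u + c • v)‖^2 = (a+c)⁻¹^2 * ‖a • u + c • v‖^2 := by
    rw [norm_smul, mul_pow, Real.norm_eq_abs, sq_abs]
  rw [hS, hE]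
  rw [hW] at h1
  exact ward_real_key a b c (‖u‖^2) (‖v‖^2) _ ha hb hc h1 h2

private lemma centroid_union_sub {k : ℕ} (A C : Finset (EuclideanSpace ℝ (Fin k)))
    (w : EuclideanSpace ℝ (Fin k)) (hAC : Disjoint A C)
    (hA : A.Nonempty) (hC : C.Nonempty) :
    centroid (A ∪ C) - w
      = ((A.card : ℝ) + C.card)⁻¹ •
        ((A.card : ℝ) • (centroid A - w) + (C.card : ℝ) • (centroid C - w)) := by
  have ha' : (A.card : ℝ) ≠ 0 := Nat.cast_ne_zero.mpr (Finset.card_pos.mpr hA).ne'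
  have hc' : (C.card : ℝ) ≠ 0 := Nat.cast_ne_zero.mpr (Finset.card_pos.mpr hC).ne'
  have hac' : (A.card : ℝ) + C.card ≠ 0 := by positivity
  simp only [centroid, Finset.sum_union hAC, Finset.card_union_of_disjoint hAC]
  push_cast
  match_scalars <;> field_simp <;> ring

theorem ward_weak_reducible {k : ℕ} (A B C : Finset (EuclideanSpace ℝ (Fin k)))
    (hA : A.Nonempty) (hB : B.Nonempty) (hC : C.Nonempty)
    (hAB : Disjoint A B) (hAC : Disjoint A C) (hBC : Disjoint B C)
    (hmax : dWard A B ≥ max (dWard A C) (dWard B C)) :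
    dWard (A ∪ C) B ≥ dWard B C ∧ dWard (B ∪ C) A ≥ dWard A C := by
  have ha : (0:ℝ) < A.card := by exact_mod_cast Finset.card_pos.mpr hA
  have hb : (0:ℝ) < B.card := by exact_mod_cast Finset.card_pos.mpr hB
  have hc : (0:ℝ) < C.card := by exact_mod_cast Finset.card_pos.mpr hC
  have hcardAC : (((A ∪ C).card : ℕ) : ℝ) = (A.card : ℝ) + C.card := by
    rw [Finset.card_union_of_disjoint hAC]; push_cast; ring
  have hcardBC : (((B ∪ C).card : ℕ) : ℝ) = (B.card : ℝ) + C.card := by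
    rw [Finset.card_union_of_disjoint hBC]; push_cast; ring
  have hdAB : dWard A B = (A.card : ℝ)*B.card/((A.card : ℝ)+B.card)*‖centroid A - centroid B‖^2 := rfl
  have hdAC : dWard A C = (A.card : ℝ)*C.card/((A.card : ℝ)+C.card)*‖centroid A - centroid C‖^2 := rfl
  have hdBC : dWard B C = (B.card : ℝ)*C.card/((B.card : ℝ)+C.card)*‖centroid B - centroid C‖^2 := rfl
  have h1 := le_trans (le_max_left _ _) hmax
  have h2 := le_trans (le_max_right _ _) hmax
  constructor
  · have key := ward_vec_key (A.card : ℝ) (B.card : ℝ) (C.card : ℝ) ha hb hc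
      (centroid A - centroid B) (centroid C - centroid B)
      (by rw [show centroid A - centroid B - (centroid C - centroid B)
              = centroid A - centroid C by abel]
          rw [hdAC, hdAB] at h1; exact h1)
      (by rw [show centroid C - centroid B = -(centroid B - centroid C) by abel, norm_neg]
          rw [hdBC, hdAB] at h2; exact h2)
    rw [ge_iff_le, hdBC,
      show centroid B - centroid C = -(centroid C - centroid B) by abel, norm_neg,
      dWard, hcardAC, centroid_union_sub A C (centroid B) hAC hA hC]
    exact key
  · have key := ward_vec_key (B.card : ℝ) (A.card : ℝ) (C.card : ℝ) hb ha hc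
      (centroid B - centroid A) (centroid C - centroid A)
      (by rw [show centroid B - centroid A - (centroid C - centroid A)
              = centroid B - centroid C by abel]
          rw [hdBC, hdAB] at h2
          calc (B.card:ℝ)*C.card/((B.card:ℝ)+C.card)*‖centroid B - centroid C‖^2
              ≤ (A.card:ℝ)*B.card/((A.card:ℝ)+B.card)*‖centroid A - centroid B‖^2 := h2
            _ = (B.card:ℝ)*A.card/((B.card:ℝ)+A.card)*‖centroid B - centroid A‖^2 := by
                rw [norm_sub_rev]; ring_nf)
      (by rw [hdAC, hdAB] at h1
          calc (A.card:ℝ)*C.card/((A.card:ℝ)+C.card)*‖centroid C - centroid A‖^2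
              = (A.card:ℝ)*C.card/((A.card:ℝ)+C.card)*‖centroid A - centroid C‖^2 := by
                rw [norm_sub_rev]
            _ ≤ (A.card:ℝ)*B.card/((A.card:ℝ)+B.card)*‖centroid A - centroid B‖^2 := h1
            _ = (B.card:ℝ)*A.card/((B.card:ℝ)+A.card)*‖centroid B - centroid A‖^2 := by
                rw [norm_sub_rev]; ring_nf)
    rw [ge_iff_le, hdAC,
      show centroid A - centroid C = -(centroid C - centroid A) by abel, norm_neg,
      dWard, hcardBC, centroid_union_sub B C (centroid A) hBC hB hC]
    calc (A.card:ℝ)*C.card/((A.card:ℝ)+C.card)*‖centroid C - centroid A‖^2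
        ≤ ((B.card:ℝ)+C.card)*A.card/(((B.card:ℝ)+C.card)+A.card)
          * ‖((B.card:ℝ)+C.card)⁻¹ • ((B.card:ℝ) • (centroid B - centroid A)
              + (C.card:ℝ) • (centroid C - centroid A))‖^2 := key
      _ = ((B.card:ℝ)+C.card)*A.card/((B.card:ℝ)+C.card+A.card)
          * ‖((B.card:ℝ)+C.card)⁻¹ • ((B.card:ℝ) • (centroid B - centroid A)
              + (C.card:ℝ) • (centroid C - centroid A))‖^2 := by ring_nf
end

section
/- Ward's linkage of a merged pair to a third cluster in terms of centroid distances: for pairwise disjoint nonempty finite clusters A, B, C ⊆ ℝ^k, |A|·‖μ(A) − μ(C)‖² + |B|·‖μ(B) − μ(C)‖² = d_Ward(A, B) + (|A| + |B|)·‖μ(A ∪ B) − μ(C)‖². -/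
open scoped Classical

private lemma key_alg {k : ℕ} (a b : ℝ) (ha : 0 < a) (hb : 0 < b)
    (u v : EuclideanSpace ℝ (Fin k)) :
    a * ‖u‖ ^ 2 + b * ‖v‖ ^ 2 =
      (a * b / (a + b)) * ‖u - v‖ ^ 2 +
        (a + b) * ‖(a + b)⁻¹ • (a • u + b • v)‖ ^ 2 := by
  have hab : (0:ℝ) < a + b := by linarith
  have h1 : ‖u - v‖ ^ 2 = ‖u‖ ^ 2 - 2 * inner ℝ u v + ‖v‖ ^ 2 := by
    rw [norm_sub_sq_real]
  have h2 : ‖a • u + b • v‖ ^ 2 =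
      a ^ 2 * ‖u‖ ^ 2 + 2 * (a * b) * inner ℝ u v + b ^ 2 * ‖v‖ ^ 2 := by
    rw [norm_add_sq_real, norm_smul, norm_smul, real_inner_smul_left,
      real_inner_smul_right, Real.norm_eq_abs, Real.norm_eq_abs,
      abs_of_pos ha, abs_of_pos hb]
    ring
  rw [norm_smul, Real.norm_eq_abs, abs_of_pos (inv_pos.mpr hab)]
  rw [mul_pow, h1, h2]
  field_simp
  ring

theorem ward_merge_identity {k : ℕ} (A B C : Finset (EuclideanSpace ℝ (Fin k)))
    (hA : A.Nonempty) (hB : B.Nonempty) (hC : C.Nonempty)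
    (hAB : Disjoint A B) (hAC : Disjoint A C) (hBC : Disjoint B C) :
    (A.card : ℝ) * ‖centroid A - centroid C‖ ^ 2 +
      (B.card : ℝ) * ‖centroid B - centroid C‖ ^ 2 =
    dWard A B + ((A.card : ℝ) + B.card) * ‖centroid (A ∪ B) - centroid C‖ ^ 2 := by
  have ha : (0:ℝ) < A.card := by exact_mod_cast Finset.card_pos.mpr hA
  have hb : (0:ℝ) < B.card := by exact_mod_cast Finset.card_pos.mpr hB
  have hab : (0:ℝ) < (A.card : ℝ) + B.card := by linarith
  have hcard : ((A ∪ B).card : ℝ) = (A.card : ℝ) + B.card := by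
    rw [Finset.card_union_of_disjoint hAB]; push_cast; ring
  have hmerge : centroid (A ∪ B) - centroid C =
      ((A.card : ℝ) + B.card)⁻¹ •
        ((A.card : ℝ) • (centroid A - centroid C) +
          (B.card : ℝ) • (centroid B - centroid C)) := by
    unfold centroid
    rw [Finset.sum_union hAB, hcard]
    rw [smul_sub, smul_sub, smul_smul, smul_smul, smul_add, smul_add, smul_smul,
      smul_smul]
    rw [mul_inv_cancel₀ ha.ne', mul_inv_cancel₀ hb.ne', one_smul, one_smul]
    match_scalars <;> (field_simp; try ring)
  rw [hmerge, dWard,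
    show centroid A - centroid B = (centroid A - centroid C) - (centroid B - centroid C) by abel]
  exact key_alg _ _ ha hb _ _
end
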